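/- There exist constants C > 0 and m₀ ∈ ℕ such that for every integer m ≥ m₀, setting Δ = 1/m and α_i = e^{−1/4} e^{i²Δ²/4} · [∏_{j=0, j≠i}^{m} (e^{−Δ/2} − e^{jΔ²/2})] / [∏_{j=0, j≠i}^{m} (e^{iΔ²/2} − e^{jΔ²/2})] for 0 ≤ i ≤ m (these are the coefficients of the orthogonal projection of g₋₁ onto span{g_{jΔ} : 0 ≤ j ≤ m}), one has Σ_{i=0}^{m} |α_i| ≤ 2^{C·m}. -/

import Mathlib

open Finset

lemma natProdSub (n : ℕ) : ∏ j ∈ Finset.range n, (n - j) = Nat.factorial n := by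
  induction n with
  | zero => rfl
  | succ n ih =>
      rw [Finset.prod_range_succ']
      have h : ∀ j ∈ Finset.range n, (n + 1 - (j+1)) = n - j := fun j _ => by omega
      rw [Finset.prod_congr rfl h, ih, Nat.factorial_succ]
      simp [Nat.mul_comm]

lemma auxProdAbs (m i : ℕ) (hi : i ≤ m) :
    ∏ j ∈ (Finset.range (m+1)).erase i, |(i:ℝ) - (j:ℝ)|
      = (Nat.factorial i : ℝ) * (Nat.factorial (m - i) : ℝ) := by
  have hsplit : (Finset.range (m+1)).erase i = Finset.range i ∪ Finset.Ico (i+1) (m+1) := by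
    ext j
    simp only [Finset.mem_erase, Finset.mem_range, Finset.mem_union, Finset.mem_Ico]
    omega
  have hdisj : Disjoint (Finset.range i) (Finset.Ico (i+1) (m+1)) := by
    rw [Finset.disjoint_left]
    intro a ha hb
    simp only [Finset.mem_range] at ha
    simp only [Finset.mem_Ico] at hb
    omega
  rw [hsplit, Finset.prod_union hdisj]
  have h1 : ∏ j ∈ Finset.range i, |(i:ℝ) - (j:ℝ)| = (Nat.factorial i : ℝ) := by
    rw [← natProdSub i, Nat.cast_prod]
    refine Finset.prod_congr rfl fun j hj => ?_
    simp only [Finset.mem_range] at hj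
    rw [Nat.cast_sub hj.le, abs_of_nonneg]
    have : (j:ℝ) ≤ i := by exact_mod_cast hj.le
    linarith
  have h2 : ∏ j ∈ Finset.Ico (i+1) (m+1), |(i:ℝ) - (j:ℝ)| = (Nat.factorial (m - i) : ℝ) := by
    rw [Finset.prod_Ico_eq_prod_range]
    have hc : m + 1 - (i + 1) = m - i := by omega
    rw [hc, ← Finset.prod_range_add_one_eq_factorial, Nat.cast_prod]
    refine Finset.prod_congr rfl fun k hk => ?_
    push_cast
    rw [show (i:ℝ) - ((i:ℝ)+1+k) = -(1+k) by ring, abs_neg, abs_of_nonneg (by positivity)]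
    ring
  rw [h1, h2]

lemma expSubExpGe {a b : ℝ} (ha : 0 ≤ a) (hab : a ≤ b) : b - a ≤ Real.exp b - Real.exp a := by
  have h1 : Real.exp b = Real.exp a * Real.exp (b - a) := by
    rw [← Real.exp_add]; ring_nf
  nlinarith [Real.add_one_le_exp (b - a), Real.one_le_exp ha, Real.exp_pos a]

lemma expSubExpLe {a b : ℝ} (hab : a ≤ b) : Real.exp b - Real.exp a ≤ (b - a) * Real.exp b := by
  have h1 : Real.exp a = Real.exp b * Real.exp (a - b) := by
    rw [← Real.exp_add]; ring_nf
  nlinarith [Real.add_one_le_exp (a - b), Real.exp_pos b]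

lemma absExpSubExpGe {a b : ℝ} (ha : 0 ≤ a) (hb : 0 ≤ b) :
    |a - b| ≤ |Real.exp a - Real.exp b| := by
  rcases le_total a b with h | h
  · rw [abs_sub_comm, abs_sub_comm (Real.exp a), abs_of_nonneg (by linarith),
      abs_of_nonneg (by linarith [Real.exp_le_exp.mpr h])]
    exact expSubExpGe ha h
  · rw [abs_of_nonneg (by linarith), abs_of_nonneg (by linarith [Real.exp_le_exp.mpr h])]
    exact expSubExpGe hb h

open MeasureTheory Real

theorem stmt3 :
    ∃ C > (0:ℝ), ∃ m₀ : ℕ, ∀ m : ℕ, m₀ ≤ m →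
      ∑ i ∈ Finset.range (m+1),
        |Real.exp (-(1:ℝ)/4) * Real.exp ((i:ℝ)^2 * (1/(m:ℝ))^2 / 4) *
          (∏ j ∈ (Finset.range (m+1)).erase i,
              (Real.exp (-(1/(m:ℝ))/2) - Real.exp ((j:ℝ) * (1/(m:ℝ))^2 / 2))) /
          (∏ j ∈ (Finset.range (m+1)).erase i,
              (Real.exp ((i:ℝ) * (1/(m:ℝ))^2 / 2) - Real.exp ((j:ℝ) * (1/(m:ℝ))^2 / 2)))|
        ≤ (2:ℝ) ^ (C * (m:ℝ)) := by
  refine ⟨5, by norm_num, 1, fun m hm => ?_⟩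
  have hm1 : (1:ℝ) ≤ (m:ℝ) := by exact_mod_cast hm
  have hm0 : (0:ℝ) < (m:ℝ) := by linarith
  set Δ : ℝ := 1/(m:ℝ) with hΔdef
  have hΔpos : 0 < Δ := by positivity
  have hΔ1 : Δ ≤ 1 := by rw [hΔdef, div_le_one hm0]; exact hm1
  have hmΔ : (m:ℝ) * Δ = 1 := by rw [hΔdef, mul_one_div_cancel hm0.ne']
  have hmΔ2 : (m:ℝ) * Δ^2 = Δ := by
    have h : (m:ℝ) * Δ^2 = ((m:ℝ) * Δ) * Δ := by ring
    rw [h, hmΔ, one_mul]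
  have key : ∀ i ∈ Finset.range (m+1),
      |Real.exp (-(1:ℝ)/4) * Real.exp ((i:ℝ)^2 * Δ^2 / 4) *
          (∏ j ∈ (Finset.range (m+1)).erase i,
              (Real.exp (-Δ/2) - Real.exp ((j:ℝ) * Δ^2 / 2))) /
          (∏ j ∈ (Finset.range (m+1)).erase i,
              (Real.exp ((i:ℝ) * Δ^2 / 2) - Real.exp ((j:ℝ) * Δ^2 / 2)))|
        ≤ (2 * Real.exp (1/2) * (m:ℝ))^m * ((m.choose i : ℝ) / (Nat.factorial m : ℝ)) := by
    intro i hi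
    rw [Finset.mem_range] at hi
    have him : i ≤ m := by omega
    have himR : (i:ℝ) ≤ (m:ℝ) := by exact_mod_cast him
    have hcard : ((Finset.range (m+1)).erase i).card = m := by
      rw [Finset.card_erase_of_mem (Finset.mem_range.mpr hi), Finset.card_range]
      omega
    -- numerator bound
    have hnum : |∏ j ∈ (Finset.range (m+1)).erase i,
        (Real.exp (-Δ/2) - Real.exp ((j:ℝ) * Δ^2 / 2))| ≤ (Δ * Real.exp (1/2))^m := by
      rw [Finset.abs_prod]
      calc ∏ j ∈ (Finset.range (m+1)).erase i, |Real.exp (-Δ/2) - Real.exp ((j:ℝ) * Δ^2 / 2)|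
          ≤ ∏ _j ∈ (Finset.range (m+1)).erase i, (Δ * Real.exp (1/2)) := by
            refine Finset.prod_le_prod (fun j _ => abs_nonneg _) (fun j hj => ?_)
            have hjm : j ≤ m := by
              have := Finset.mem_range.mp (Finset.mem_of_mem_erase hj); omega
            have hjmR : (j:ℝ) ≤ (m:ℝ) := by exact_mod_cast hjm
            have hb0 : (0:ℝ) ≤ (j:ℝ) * Δ^2 / 2 := by positivity
            have hab : -Δ/2 ≤ (j:ℝ) * Δ^2 / 2 := by linarith
            have hjb : (j:ℝ) * Δ^2 ≤ Δ := by nlinarith [sq_nonneg Δ]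
            calc |Real.exp (-Δ/2) - Real.exp ((j:ℝ) * Δ^2 / 2)|
                = Real.exp ((j:ℝ) * Δ^2 / 2) - Real.exp (-Δ/2) := by
                  rw [abs_sub_comm, abs_of_nonneg (sub_nonneg.mpr (Real.exp_le_exp.mpr hab))]
              _ ≤ ((j:ℝ) * Δ^2 / 2 - (-Δ/2)) * Real.exp ((j:ℝ) * Δ^2 / 2) :=
                  expSubExpLe hab
              _ ≤ Δ * Real.exp (1/2) := by
                  refine mul_le_mul (by linarith) (Real.exp_le_exp.mpr (by linarith))
                    (Real.exp_pos _).le hΔpos.le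
        _ = (Δ * Real.exp (1/2))^m := by rw [Finset.prod_const, hcard]
    -- denominator bound
    have hden : (Δ^2/2)^m * ((Nat.factorial i : ℝ) * (Nat.factorial (m-i) : ℝ))
        ≤ |∏ j ∈ (Finset.range (m+1)).erase i,
            (Real.exp ((i:ℝ) * Δ^2 / 2) - Real.exp ((j:ℝ) * Δ^2 / 2))| := by
      rw [Finset.abs_prod]
      calc (Δ^2/2)^m * ((Nat.factorial i : ℝ) * (Nat.factorial (m-i) : ℝ))
          = ∏ j ∈ (Finset.range (m+1)).erase i, (|(i:ℝ) - (j:ℝ)| * (Δ^2/2)) := by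
            rw [Finset.prod_mul_distrib, Finset.prod_const, hcard, auxProdAbs m i him]
            ring
        _ ≤ ∏ j ∈ (Finset.range (m+1)).erase i,
              |Real.exp ((i:ℝ) * Δ^2 / 2) - Real.exp ((j:ℝ) * Δ^2 / 2)| := by
            refine Finset.prod_le_prod (fun j _ => by positivity) (fun j hj => ?_)
            have h := absExpSubExpGe (a := (i:ℝ) * Δ^2 / 2) (b := (j:ℝ) * Δ^2 / 2)
              (by positivity) (by positivity)
            have heq : (i:ℝ) * Δ^2 / 2 - (j:ℝ) * Δ^2 / 2 = ((i:ℝ) - (j:ℝ)) * (Δ^2/2) := by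
              ring
            rwa [heq, abs_mul, abs_of_nonneg (by positivity : (0:ℝ) ≤ Δ^2/2)] at h
    have hfac1 : (0:ℝ) < (Nat.factorial i : ℝ) := by exact_mod_cast Nat.factorial_pos i
    have hfac2 : (0:ℝ) < (Nat.factorial (m-i) : ℝ) := by exact_mod_cast Nat.factorial_pos (m-i)
    have hDlow : (0:ℝ) < (Δ^2/2)^m * ((Nat.factorial i : ℝ) * (Nat.factorial (m-i) : ℝ)) := by
      exact mul_pos (pow_pos (by positivity) m) (mul_pos hfac1 hfac2)
    have hfront : Real.exp (-(1:ℝ)/4) * Real.exp ((i:ℝ)^2 * Δ^2 / 4) ≤ 1 := by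
      rw [← Real.exp_add, Real.exp_le_one_iff]
      have h1 : (i:ℝ) * Δ ≤ 1 := by nlinarith
      have h2 : (0:ℝ) ≤ (i:ℝ) * Δ := by positivity
      nlinarith
    have hchoose : (m.choose i : ℝ) * ((Nat.factorial i : ℝ) * (Nat.factorial (m-i) : ℝ))
        = (Nat.factorial m : ℝ) := by
      rw [← mul_assoc]
      exact_mod_cast Nat.choose_mul_factorial_mul_factorial him
    have hpow : (Δ * Real.exp (1/2))^m = (2 * Real.exp (1/2) * (m:ℝ))^m * (Δ^2/2)^m := by
      rw [← mul_pow]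
      congr 1
      have h : 2 * Real.exp (1/2) * (m:ℝ) * (Δ^2/2) = Real.exp (1/2) * ((m:ℝ) * Δ^2) := by
        ring
      rw [h, hmΔ2]; ring
    rw [abs_div, abs_mul, abs_mul, Real.abs_exp, Real.abs_exp]
    calc Real.exp (-(1:ℝ)/4) * Real.exp ((i:ℝ)^2 * Δ^2 / 4) *
          |∏ j ∈ (Finset.range (m+1)).erase i,
              (Real.exp (-Δ/2) - Real.exp ((j:ℝ) * Δ^2 / 2))| /
          |∏ j ∈ (Finset.range (m+1)).erase i,
              (Real.exp ((i:ℝ) * Δ^2 / 2) - Real.exp ((j:ℝ) * Δ^2 / 2))|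
        ≤ (1 * (Δ * Real.exp (1/2))^m) /
            ((Δ^2/2)^m * ((Nat.factorial i : ℝ) * (Nat.factorial (m-i) : ℝ))) := by
          refine div_le_div₀ (by positivity) ?_ hDlow hden
          exact mul_le_mul hfront hnum (abs_nonneg _) zero_le_one
      _ = (2 * Real.exp (1/2) * (m:ℝ))^m * ((m.choose i : ℝ) / (Nat.factorial m : ℝ)) := by
          rw [one_mul, hpow, ← hchoose]
          have hch0 : (0:ℝ) < (m.choose i : ℝ) := by exact_mod_cast Nat.choose_pos him
          have hp0 : (0:ℝ) < (Δ^2/2)^m := pow_pos (by positivity) m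
          field_simp
  calc ∑ i ∈ Finset.range (m+1),
        |Real.exp (-(1:ℝ)/4) * Real.exp ((i:ℝ)^2 * Δ^2 / 4) *
          (∏ j ∈ (Finset.range (m+1)).erase i,
              (Real.exp (-Δ/2) - Real.exp ((j:ℝ) * Δ^2 / 2))) /
          (∏ j ∈ (Finset.range (m+1)).erase i,
              (Real.exp ((i:ℝ) * Δ^2 / 2) - Real.exp ((j:ℝ) * Δ^2 / 2)))|
      ≤ ∑ i ∈ Finset.range (m+1),
          (2 * Real.exp (1/2) * (m:ℝ))^m * ((m.choose i : ℝ) / (Nat.factorial m : ℝ)) :=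
        Finset.sum_le_sum key
    _ = (2 * Real.exp (1/2) * (m:ℝ))^m * ((2:ℝ)^m / (Nat.factorial m : ℝ)) := by
        rw [← Finset.mul_sum, ← Finset.sum_div]
        congr 2
        rw [← Nat.cast_sum, Nat.sum_range_choose]
        push_cast
        ring
    _ ≤ (2:ℝ) ^ ((5:ℝ) * (m:ℝ)) := by
        have hmm : (m:ℝ)^m / (Nat.factorial m : ℝ) ≤ Real.exp 1 ^ m := by
          rw [Real.exp_one_pow]
          exact Real.pow_div_factorial_le_exp (x := (m:ℝ)) hm0.le m
        have h4 : 4 * Real.exp (1/2) * Real.exp 1 ≤ 32 := by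
          nlinarith [Real.exp_one_lt_d9, Real.exp_le_exp.mpr (show (1:ℝ)/2 ≤ 1 by norm_num),
            Real.exp_pos 1, Real.exp_pos ((1:ℝ)/2)]
        have step1 : (2 * Real.exp (1/2) * (m:ℝ))^m * ((2:ℝ)^m / (Nat.factorial m : ℝ))
            = (4 * Real.exp (1/2))^m * ((m:ℝ)^m / (Nat.factorial m : ℝ)) := by
          have e1 : ((2:ℝ) * Real.exp (1/2) * (m:ℝ))^m
              = (2*Real.exp (1/2))^m * (m:ℝ)^m := mul_pow _ _ m
          have e2 : ((4:ℝ) * Real.exp (1/2))^m = (2*Real.exp (1/2))^m * 2^m := by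
            rw [← mul_pow]; ring
          rw [e1, e2]; ring
        have step2 : (4 * Real.exp (1/2))^m * ((m:ℝ)^m / (Nat.factorial m : ℝ))
            ≤ (4 * Real.exp (1/2))^m * Real.exp 1 ^ m := by
          refine mul_le_mul_of_nonneg_left hmm (by positivity)
        have step3 : (4 * Real.exp (1/2))^m * Real.exp 1 ^ m
            = (4 * Real.exp (1/2) * Real.exp 1)^m := by rw [← mul_pow]
        have step4 : (4 * Real.exp (1/2) * Real.exp 1)^m ≤ (32:ℝ)^m :=
          pow_le_pow_left₀ (by positivity) h4 m
        have step5 : ((32:ℝ))^m = (2:ℝ) ^ ((5:ℝ) * (m:ℝ)) := by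
          have h : (5:ℝ) * (m:ℝ) = ((5*m : ℕ):ℝ) := by push_cast; ring
          rw [h, Real.rpow_natCast, pow_mul]
          norm_num
        calc (2 * Real.exp (1/2) * (m:ℝ))^m * ((2:ℝ)^m / (Nat.factorial m : ℝ))
            = (4 * Real.exp (1/2))^m * ((m:ℝ)^m / (Nat.factorial m : ℝ)) := step1
          _ ≤ (4 * Real.exp (1/2))^m * Real.exp 1 ^ m := step2
          _ = (4 * Real.exp (1/2) * Real.exp 1)^m := step3
          _ ≤ (32:ℝ)^m := step4
          _ = (2:ℝ) ^ ((5:ℝ) * (m:ℝ)) := step5
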